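/- Let σ > 0 and let μ_σ be the measure on ℝ with density t ↦ (1/(2σ))·exp(−|t|/σ) with respect to Lebesgue measure (the zero-mean Laplace distribution with scale σ). For every v ≥ 0, the pushforward of μ_σ under the map t ↦ max(v + t, 0) equals ((1/2)·exp(−v/σ))·δ₀ + ν_v, where δ₀ is the Dirac measure at 0 and ν_v is the measure with density w ↦ (1/(2σ))·exp(−|w − v|/σ) with respect to Lebesgue measure restricted to the interval (0, ∞). -/

import Mathlib

open MeasureTheory Set Real

lemma key1 (σ v : ℝ) (hσ : 0 < σ) (hv : 0 ≤ v) :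
    ∫⁻ t in Iic (-v), ENNReal.ofReal (1 / (2 * σ) * Real.exp (-|t| / σ)) ∂(volume : Measure ℝ)
      = ENNReal.ofReal (1 / 2 * Real.exp (-v / σ)) := by
  have hF : Measurable fun t : ℝ => ENNReal.ofReal (1 / (2 * σ) * Real.exp (-|t| / σ)) := by
    fun_prop
  calc ∫⁻ t in Iic (-v), ENNReal.ofReal (1 / (2 * σ) * Real.exp (-|t| / σ)) ∂volume
      = ∫⁻ t in Iic (-v), ENNReal.ofReal (1 / (2 * σ) * Real.exp (-|t| / σ))
          ∂(Measure.map Neg.neg volume) := by rw [Measure.map_neg_eq_self]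
    _ = ∫⁻ x in Neg.neg ⁻¹' (Iic (-v)),
          ENNReal.ofReal (1 / (2 * σ) * Real.exp (-|(-x)| / σ)) ∂volume :=
        setLIntegral_map measurableSet_Iic hF measurable_neg
    _ = ∫⁻ x in Ici v, ENNReal.ofReal (1 / (2 * σ) * Real.exp (-|(-x)| / σ)) ∂volume := by
        norm_num
    _ = ∫⁻ x in Ioi v, ENNReal.ofReal (1 / (2 * σ) * Real.exp (-|(-x)| / σ)) ∂volume := by
        rw [← MeasureTheory.restrict_Ioi_eq_restrict_Ici]
    _ = ∫⁻ x in Ioi v, ENNReal.ofReal (1 / (2 * σ) * Real.exp (-(σ⁻¹ * x))) ∂volume := by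
        refine setLIntegral_congr_fun measurableSet_Ioi (fun x hx => ?_)
        have hx0 : 0 ≤ x := le_of_lt (lt_of_le_of_lt hv hx)
        rw [abs_neg, abs_of_nonneg hx0]
        ring_nf
    _ = ENNReal.ofReal (∫ x in Ioi v, 1 / (2 * σ) * Real.exp (-(σ⁻¹ * x))) := by
        rw [ofReal_integral_eq_lintegral_ofReal]
        · have : IntegrableOn (fun x : ℝ => Real.exp (-σ⁻¹ * x)) (Ioi v) :=
            exp_neg_integrableOn_Ioi v (inv_pos.2 hσ)
          simpa [neg_mul] using this.const_mul (1 / (2 * σ))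
        · exact Filter.Eventually.of_forall fun x => by positivity
    _ = ENNReal.ofReal (1 / 2 * Real.exp (-v / σ)) := by
        congr 1
        rw [MeasureTheory.integral_const_mul]
        have := integral_comp_mul_left_Ioi (fun y : ℝ => Real.exp (-y)) v (inv_pos.2 hσ)
        simp only [smul_eq_mul, inv_inv] at this
        rw [this, integral_exp_neg_Ioi]
        field_simp

theorem laplace_positive_part_pushforward (σ v : ℝ) (hσ : 0 < σ) (hv : 0 ≤ v) :
    Measure.map (fun t : ℝ => max (v + t) 0)
        (volume.withDensity fun t : ℝ =>
          ENNReal.ofReal (1 / (2 * σ) * Real.exp (-|t| / σ))) =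
      ENNReal.ofReal (1 / 2 * Real.exp (-v / σ)) • Measure.dirac (0 : ℝ) +
        (volume.restrict (Set.Ioi (0 : ℝ))).withDensity
          (fun w : ℝ => ENNReal.ofReal (1 / (2 * σ) * Real.exp (-|w - v| / σ))) := by
  have hF : Measurable fun t : ℝ => ENNReal.ofReal (1 / (2 * σ) * Real.exp (-|t| / σ)) := by
    fun_prop
  have hG : Measurable fun w : ℝ => ENNReal.ofReal (1 / (2 * σ) * Real.exp (-|w - v| / σ)) := by
    fun_prop
  have hf : Measurable fun t : ℝ => max (v + t) 0 := by fun_prop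
  ext s hs
  have hAs : MeasurableSet ((fun t : ℝ => max (v + t) 0) ⁻¹' s) := hf hs
  rw [Measure.map_apply hf hs, withDensity_apply _ hAs]
  set A := (fun t : ℝ => max (v + t) 0) ⁻¹' s with hA
  -- split
  have hsplit : A = (A ∩ Iic (-v)) ∪ (A ∩ Ioi (-v)) := by
    rw [← Set.inter_union_distrib_left, Set.Iic_union_Ioi, Set.inter_univ]
  have hA2 : A ∩ Ioi (-v) = (fun t : ℝ => v + t) ⁻¹' (s ∩ Ioi 0) := by
    ext t
    simp only [A, Set.mem_inter_iff, Set.mem_preimage, Set.mem_Ioi]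
    constructor
    · rintro ⟨hts, htv⟩
      have hpos : 0 < v + t := by linarith
      rw [max_eq_left hpos.le] at hts
      exact ⟨hts, hpos⟩
    · rintro ⟨hts, hpos⟩
      refine ⟨?_, by linarith⟩
      rwa [max_eq_left hpos.le]
  have hdisj : Disjoint (A ∩ Iic (-v)) (A ∩ Ioi (-v)) :=
    (Set.Iic_disjoint_Ioi le_rfl).mono Set.inter_subset_right Set.inter_subset_right
  have hmeas2 : MeasurableSet (A ∩ Ioi (-v)) := hAs.inter measurableSet_Ioi
  rw [hsplit, lintegral_union hmeas2 hdisj]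
  -- second term
  have hterm2 : ∫⁻ t in A ∩ Ioi (-v), ENNReal.ofReal (1 / (2 * σ) * Real.exp (-|t| / σ))
      = ∫⁻ w in s ∩ Ioi 0, ENNReal.ofReal (1 / (2 * σ) * Real.exp (-|w - v| / σ)) := by
    rw [hA2]
    have hmap : Measure.map (fun t : ℝ => v + t) volume = volume :=
      map_add_left_eq_self volume v
    have := setLIntegral_map (μ := (volume : Measure ℝ)) (s := s ∩ Ioi (0:ℝ))
      (hs.inter measurableSet_Ioi) hG (measurable_const_add v)
    rw [hmap] at this
    simp only [add_sub_cancel_left] at this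
    exact this.symm
  rw [hterm2]
  -- RHS
  rw [Measure.add_apply, Measure.smul_apply, Measure.dirac_apply' _ hs,
    withDensity_apply _ hs, Measure.restrict_restrict hs]
  by_cases h0 : (0 : ℝ) ∈ s
  · have hA1 : A ∩ Iic (-v) = Iic (-v) := by
      apply Set.inter_eq_self_of_subset_right
      intro t ht
      simp only [A, Set.mem_preimage]
      have htv : t ≤ -v := ht
      have : max (v + t) 0 = 0 := max_eq_right (by linarith)
      rwa [this]
    rw [hA1, key1 σ v hσ hv]
    simp [Set.indicator_of_mem h0]
  · have hA1 : A ∩ Iic (-v) = ∅ := by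
      ext t
      simp only [A, Set.mem_inter_iff, Set.mem_preimage, Set.mem_Iic, Set.mem_empty_iff_false,
        iff_false, not_and]
      intro hts htv
      have : max (v + t) 0 = 0 := max_eq_right (by linarith)
      rw [this] at hts
      exact h0 hts
    rw [hA1]
    simp [Set.indicator_of_notMem h0]
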